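/- Let D, H be self-adjoint operators on a Hilbert space with H bounded, H preserving Dom(D), and [D,H] bounded, and suppose there exist a bounded positive operator V and g > 0 with H² + V ≥ g²·1. Then for the self-adjoint operator L_κ = [[0, κD − iH],[κD + iH, 0]] one has L_κ² + V⊕V ≥ (g² − κ‖[D,H]‖)·1 as quadratic forms on Dom(D)⊕Dom(D); in particular L_κ² + V⊕V is bounded below by a positive constant whenever κ < g²/‖[D,H]‖. -/

import Mathlib

local notation "⟪" x ", " y "⟫" => @inner ℂ _ _ x y

/-- Lower bound for the square of the spectral localizer: if `H² + V ≥ g²·1` with `V ≥ 0`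
bounded, then `L_κ² + V⊕V ≥ (g² - κ‖[D,H]‖)·1` as quadratic forms on `dom ⊕ dom`, where
`L_κ = [[0, κD - iH],[κD + iH, 0]]`. -/
theorem stmt_5 {E : Type*} [NormedAddCommGroup E] [InnerProductSpace ℂ E] [CompleteSpace E]
    (dom : Submodule ℂ E) (Dop : dom →ₗ[ℂ] E)
    (hsymm : ∀ ψ φ : dom, ⟪Dop ψ, (φ : E)⟫ = ⟪(ψ : E), Dop φ⟫)
    (H : E →L[ℂ] E) (hH : IsSelfAdjoint H)
    (hpres : ∀ x ∈ dom, H x ∈ dom)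
    (V : E →L[ℂ] E) (hV : V.IsPositive)
    (g : ℝ) (hg : 0 < g)
    (hgap : ∀ x : E, g ^ 2 * ‖x‖ ^ 2 ≤ (⟪x, (H ^ 2 + V) x⟫).re)
    (Cop : E →L[ℂ] E)
    (hCop : ∀ ψ : dom, Cop (ψ : E) = Dop ⟨H ψ, hpres _ ψ.2⟩ - H (Dop ψ))
    (κ : ℝ) (hκ : 0 < κ) :
    ∀ ψ φ : dom,
      (g ^ 2 - κ * ‖Cop‖) * (‖(ψ : E)‖ ^ 2 + ‖(φ : E)‖ ^ 2) ≤
        ‖κ • Dop φ - Complex.I • H φ‖ ^ 2 + ‖κ • Dop ψ + Complex.I • H ψ‖ ^ 2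
          + (⟪(ψ : E), V ψ⟫).re + (⟪(φ : E), V φ⟫).re := by
  have hsym : ∀ x y : E, ⟪H x, y⟫ = ⟪x, H y⟫ := fun x y => hH.isSymmetric x y
  -- key single-vector estimate, for sign s = ±1
  have key : ∀ (ψ : dom) (s : ℝ), s = 1 ∨ s = -1 →
      (g ^ 2 - κ * ‖Cop‖) * ‖(ψ : E)‖ ^ 2 ≤
        ‖κ • Dop ψ + ((s : ℂ) * Complex.I) • H ψ‖ ^ 2 + (⟪(ψ : E), V ψ⟫).re := by
    intro ψ s hs
    set z : ℂ := ⟪Dop ψ, H (ψ : E)⟫ with hz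
    -- commutator identity: ⟪ψ, Cop ψ⟫ = z - conj z
    have hcomm : ⟪(ψ : E), Cop (ψ : E)⟫ = z - (starRingEnd ℂ) z := by
      rw [hCop ψ, inner_sub_right]
      have h1 : ⟪(ψ : E), Dop ⟨H ψ, hpres _ ψ.2⟩⟫ = z := by
        rw [← hsymm ψ ⟨H ψ, hpres _ ψ.2⟩]
      have h2 : ⟪(ψ : E), H (Dop ψ)⟫ = (starRingEnd ℂ) z := by
        rw [← hsym (ψ : E) (Dop ψ), ← inner_conj_symm]
      rw [h1, h2]
    -- bound on Im z
    have him : 2 * |z.im| ≤ ‖Cop‖ * ‖(ψ : E)‖ ^ 2 := by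
      have h1 : ‖(⟪(ψ : E), Cop (ψ : E)⟫ : ℂ)‖ ≤ ‖Cop‖ * ‖(ψ : E)‖ ^ 2 := by
        calc ‖(⟪(ψ : E), Cop (ψ : E)⟫ : ℂ)‖ ≤ ‖(ψ : E)‖ * ‖Cop (ψ : E)‖ :=
              norm_inner_le_norm _ _
          _ ≤ ‖(ψ : E)‖ * (‖Cop‖ * ‖(ψ : E)‖) := by
              gcongr; exact Cop.le_opNorm _
          _ = ‖Cop‖ * ‖(ψ : E)‖ ^ 2 := by ring
      have h2 : |(⟪(ψ : E), Cop (ψ : E)⟫).im| ≤ ‖(⟪(ψ : E), Cop (ψ : E)⟫ : ℂ)‖ := by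
        exact Complex.abs_im_le_norm _
      have h3 : (⟪(ψ : E), Cop (ψ : E)⟫).im = 2 * z.im := by
        rw [hcomm]; simp [Complex.sub_im, Complex.conj_im]; ring
      rw [h3] at h2
      calc 2 * |z.im| = |2 * z.im| := by rw [abs_mul]; norm_num
        _ ≤ _ := le_trans h2 h1
    -- expand the norm square
    have hexp : ‖κ • Dop ψ + ((s : ℂ) * Complex.I) • H ψ‖ ^ 2
        = κ ^ 2 * ‖Dop ψ‖ ^ 2 + ‖H (ψ : E)‖ ^ 2 - 2 * s * κ * z.im := by
      rw [@norm_add_sq ℂ]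
      have h1 : ‖κ • Dop ψ‖ = κ * ‖Dop ψ‖ := by
        rw [norm_smul]; simp [abs_of_pos hκ]
      have h2 : ‖((s : ℂ) * Complex.I) • H (ψ : E)‖ = ‖H (ψ : E)‖ := by
        rw [norm_smul]
        rcases hs with h | h <;> simp [h]
      have h4 : RCLike.re (⟪κ • Dop ψ, ((s : ℂ) * Complex.I) • H (ψ : E)⟫ : ℂ)
          = -(s * κ * z.im) := by
        rw [inner_smul_right, RCLike.real_smul_eq_coe_smul (K := ℂ), inner_smul_left,
          RCLike.conj_ofReal, ← hz]
        simp [Complex.mul_re, Complex.mul_im]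
        ring
      rw [h1, h2, h4]; ring
    -- gap estimate
    have hgapψ : g ^ 2 * ‖(ψ : E)‖ ^ 2 ≤ ‖H (ψ : E)‖ ^ 2 + (⟪(ψ : E), V ψ⟫).re := by
      have hg1 := hgap (ψ : E)
      have h5 : (⟪H (ψ : E), H (ψ : E)⟫).re = ‖H (ψ : E)‖ ^ 2 := by
        have := inner_self_eq_norm_sq (𝕜 := ℂ) (H (ψ : E))
        simpa using this
      have hH2 : (⟪(ψ : E), (H ^ 2 + V) (ψ : E)⟫).re
          = ‖H (ψ : E)‖ ^ 2 + (⟪(ψ : E), V (ψ : E)⟫).re := by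
        have he : (H ^ 2 + V) (ψ : E) = H (H (ψ : E)) + V (ψ : E) := by
          simp [pow_two]
        rw [he, inner_add_right, Complex.add_re, ← hsym (ψ : E) (H (ψ : E)), h5]
      rw [hH2] at hg1
      linarith
    -- cross-term bound
    have hcross : -(κ * ‖Cop‖ * ‖(ψ : E)‖ ^ 2) ≤ -(2 * s * κ * z.im) := by
      have h1 : |2 * s * κ * z.im| ≤ κ * ‖Cop‖ * ‖(ψ : E)‖ ^ 2 := by
        have hs1 : |s| = 1 := by rcases hs with h | h <;> simp [h]
        have heq : |2 * s * κ * z.im| = κ * (2 * |z.im|) := by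
          rw [abs_mul, abs_mul, abs_mul, hs1, abs_of_pos hκ]
          norm_num; ring
        rw [heq]
        calc κ * (2 * |z.im|) ≤ κ * (‖Cop‖ * ‖(ψ : E)‖ ^ 2) := by gcongr
          _ = κ * ‖Cop‖ * ‖(ψ : E)‖ ^ 2 := by ring
      linarith [le_abs_self (2 * s * κ * z.im), neg_abs_le (2 * s * κ * z.im)]
    have hD2 : 0 ≤ κ ^ 2 * ‖Dop ψ‖ ^ 2 := by positivity
    rw [hexp]
    nlinarith [hgapψ, hcross, hD2]
  intro ψ φ
  have h1 := key ψ 1 (Or.inl rfl)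
  have h2 := key φ (-1) (Or.inr rfl)
  have e1 : ((1 : ℝ) : ℂ) * Complex.I = Complex.I := by norm_num
  have e2 : κ • Dop φ - Complex.I • H φ
      = κ • Dop φ + (((-1 : ℝ) : ℂ) * Complex.I) • H φ := by
    push_cast
    rw [sub_eq_add_neg, ← neg_smul]
    norm_num
  rw [e1] at h1
  rw [e2]
  linarith
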